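/- In the Suzy–Billy model M: ButFor(M, (G = 1)) = {G} (there is no nontrivial but-for cause of the bottle shattering), S ∈ HP(M, (G = 1)), and B is a preempted cause of (G = 1) with respect to HP, i.e., B is a putative cause of (G = 1) in M with respect to HP but B ∉ HP(M, (G = 1)). -/

import Mathlib

namespace HPFramework

open Classical

/-- A causal model in the Halpern–Pearl framework, over exogenous variables `U`,
endogenous variables `V` and value domain `D`.  It packages the causal structure
(the finite ranges of the variables), the DAG (the well-founded `parent` relation),
the structural equations `F` (each depending only on the exogenous variables and the
parents, and taking values in the range), and the context `ctx`. -/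
structure CausalModel (U V D : Type) [Fintype U] [Fintype V] where
  rangeU : U → Finset D
  range : V → Finset D
  rangeU_nonempty : ∀ W, (rangeU W).Nonempty
  range_nonempty : ∀ X, (range X).Nonempty
  parent : V → V → Prop
  acyclic : WellFounded parent
  F : V → (U → D) → (V → D) → D
  F_parents : ∀ X u (a b : V → D), (∀ Y, parent Y X → a Y = b Y) → F X u a = F X u b
  F_range : ∀ X u v, (∀ W, u W ∈ rangeU W) → (∀ Y, v Y ∈ range Y) → F X u v ∈ range X
  ctx : U → D
  ctx_range : ∀ W, ctx W ∈ rangeU W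

variable {U V D : Type} [Fintype U] [Fintype V]

/-- The unique solution `S_M` of the system of structural equations of `M`. -/
noncomputable def sol (M : CausalModel U V D) : V → D :=
  WellFounded.fix M.acyclic fun X ih =>
    M.F X M.ctx fun Y => if h : M.parent Y X then ih Y h else (M.range_nonempty Y).choose

/-- A partial, range-permitted assignment of values to the endogenous variables of `M`. -/
def PAssign (M : CausalModel U V D) : Type :=
  {g : V → Option D // ∀ X d, g X = some d → d ∈ M.range X}

/-- The intervened model `M_[X⃗ ← x⃗]`: the equation of each variable assigned a value
by `g` is replaced by the corresponding constant; other equations are unchanged. -/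
noncomputable def intervene (M : CausalModel U V D) (g : PAssign M) : CausalModel U V D where
  rangeU := M.rangeU
  range := M.range
  rangeU_nonempty := M.rangeU_nonempty
  range_nonempty := M.range_nonempty
  parent := M.parent
  acyclic := M.acyclic
  F := fun X u v => (g.1 X).getD (M.F X u v)
  F_parents := by
    intro X u a b hab
    cases h : g.1 X with
    | none => simp only [h, Option.getD_none]; exact M.F_parents X u a b hab
    | some d => simp [h]
  F_range := by
    intro X u v hu hv
    cases h : g.1 X with
    | none => simpa [h] using M.F_range X u v hu hv
    | some d => simpa [h] using g.2 X d h
  ctx := M.ctx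
  ctx_range := M.ctx_range

/-- Basic formulas: Boolean combinations of atoms `(X = x)` with `X` endogenous. -/
inductive BForm (V D : Type) : Type where
  | atom : V → D → BForm V D
  | not : BForm V D → BForm V D
  | and : BForm V D → BForm V D → BForm V D

/-- Evaluation of a basic formula at an assignment of values to the endogenous variables. -/
def BForm.eval (s : V → D) : BForm V D → Prop
  | .atom X x => s X = x
  | .not φ => ¬ φ.eval s
  | .and φ ψ => φ.eval s ∧ ψ.eval s

/-- `M ⊨ φ` for a basic formula `φ`, evaluated via the solution `S_M`. -/
def Sat (M : CausalModel U V D) (φ : BForm V D) : Prop := (BForm.eval (sol M)) φ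

variable [DecidableEq V]

/-- The single intervention `[X ← x]` (with `x` in the range of `X`). -/
noncomputable def single (M : CausalModel U V D) (X : V) (x : D)
    (hx : x ∈ M.range X) : PAssign M :=
  ⟨fun Y => if Y = X then some x else none, by
    intro Y d h
    simp only at h
    split at h
    next heq => cases h; exact heq ▸ hx
    next => cases h⟩

/-- The but-for theory: `X ∈ ButFor(M,φ)` iff `M ⊨ φ` and there is `x ∈ R(X)` with
`M ⊨ [X ← x] ¬φ`. -/
noncomputable def ButFor (M : CausalModel U V D) (φ : BForm V D) : Set V :=
  {X | Sat M φ ∧ ∃ x, ∃ hx : x ∈ M.range X, ¬ Sat (intervene M (single M X x hx)) φ}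

/-- `ℳ(A)` (relative to `M`): all models obtained from `M` by a (possibly partial)
range-permitted assignment to the variables in `A`, while any assigned variable outside
`A` is held fixed at its actual value in `M`. -/
def MSet (M : CausalModel U V D) (A : Set V) : Set (CausalModel U V D) :=
  {M' | ∃ g : PAssign M,
    (∀ X, X ∉ A → ∀ d, g.1 X = some d → d = sol M X) ∧ M' = intervene M g}

/-- A causal theory: a map assigning to every model and basic formula a set of
endogenous variables (the causes). -/
def CausalTheory (U V D : Type) [Fintype U] [Fintype V] : Type _ :=
  CausalModel U V D → BForm V D → Set V

/-- `X` is a putative cause of `φ` in `M` (w.r.t. the theory `C`). -/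
noncomputable def Putative (C : CausalTheory U V D) (M : CausalModel U V D)
    (φ : BForm V D) (X : V) : Prop :=
  ∃ M' ∈ MSet M (C M φ), sol M X = sol M' X ∧ X ∈ ButFor M' φ

/-- `X` is a preempted cause of `φ` in `M` (w.r.t. `C`): putative but not a cause. -/
noncomputable def Preempted (C : CausalTheory U V D) (M : CausalModel U V D)
    (φ : BForm V D) (X : V) : Prop :=
  Putative C M φ X ∧ X ∉ C M φ

/-- A theory is similarity-based if it recognises at least all but-for causes and at
most all putative causes. -/
noncomputable def SimilarityBased (C : CausalTheory U V D) : Prop :=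
  ∀ M φ, ButFor M φ ⊆ C M φ ∧ ∀ X ∈ C M φ, Putative C M φ X

/-- The principle of presumption. -/
noncomputable def Presumption (C : CausalTheory U V D) : Prop :=
  ∀ M φ X, Preempted C M φ X →
    ∀ M' ∈ MSet M (C M φ), sol M' X = sol M X → X ∈ ButFor M' φ →
      ∃ W, W ∉ C M φ ∧ sol M W ≠ sol M' W

/-- Empirical causal theories (fixed-point characterisation). -/
noncomputable def Empirical (C : CausalTheory U V D) : Prop :=
  ∀ M φ X, X ∈ C M φ ↔
    ∃ M' ∈ MSet M (C M φ), sol M X = sol M' X ∧ X ∈ ButFor M' φ ∧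
      ∀ W, W ∉ C M φ → sol M W = sol M' W

/-- The relation `M₁ ⊑_{C,φ} M₂`. -/
noncomputable def CRel (C : CausalTheory U V D) (φ : BForm V D)
    (M₁ M₂ : CausalModel U V D) : Prop :=
  M₂ ∈ MSet M₁ (C M₁ φ) ∧ Sat M₂ φ ∧ ∀ X, X ∉ C M₁ φ → sol M₁ X = sol M₂ X

/-- The closure property. -/
noncomputable def Closure (C : CausalTheory U V D) : Prop :=
  ∀ (M : CausalModel U V D) (φ : BForm V D) M', CRel C φ M M' → C M' φ ⊆ C M φ

/-- AC1 and AC2 of Halpern's (2015) definition, for the set `Xs`: `M ⊨ φ` and there is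
an intervention assigning (range-permitted) values to all of `Xs` and holding any other
assigned variable fixed at its actual value, after which `¬φ` holds. -/
noncomputable def AC12 (M : CausalModel U V D) (φ : BForm V D) (Xs : Set V) : Prop :=
  Sat M φ ∧ ∃ g : PAssign M,
    (∀ X ∈ Xs, (g.1 X).isSome) ∧
    (∀ X, X ∉ Xs → ∀ d, g.1 X = some d → d = sol M X) ∧
    ¬ Sat (intervene M g) φ

/-- `Xs` is a complex cause of `φ` in `M`: AC1, AC2 and the minimality condition AC3. -/
noncomputable def ComplexCause (M : CausalModel U V D) (φ : BForm V D) (Xs : Set V) : Prop :=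
  AC12 M φ Xs ∧ ∀ Ys : Set V, Ys ⊂ Xs → ¬ AC12 M φ Ys

/-- The HP theory: `X ∈ HP(M,φ)` iff `X` belongs to some complex cause of `φ` in `M`. -/
noncomputable def HP : CausalTheory U V D := fun M φ =>
  {X | ∃ Xs : Set V, X ∈ Xs ∧ ComplexCause M φ Xs}

/-- Helper: a relation admitting a strictly monotone rank function is well-founded. -/
theorem wf_of_rank {α : Type} (r : α → α → Prop) (rk : α → ℕ)
    (h : ∀ a b, r a b → rk a < rk b) : WellFounded r :=
  Subrelation.wf (fun {a b} hr => h a b hr) (InvImage.wf rk Nat.lt_wfRel.wf)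



/-- The endogenous variables of the Suzy–Billy model. -/
inductive SVar : Type
  | S | B | HS | HB | G
deriving DecidableEq

instance : Fintype SVar :=
  ⟨{SVar.S, SVar.B, SVar.HS, SVar.HB, SVar.G}, by intro x; cases x <;> simp⟩

open SVar

/-- The Suzy–Billy model: all variables binary; equations `S = U₁`, `B = U₂`,
`H_S = S`, `H_B = B - H_S` (truncated subtraction on `{0,1}`), `G = max {H_S, H_B}`;
context `u = (1,1)`. -/
noncomputable def MSB : CausalModel (Fin 2) SVar ℕ where
  rangeU := fun _ => {0, 1}
  range := fun _ => {0, 1}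
  rangeU_nonempty := fun _ => ⟨0, by simp⟩
  range_nonempty := fun _ => ⟨0, by simp⟩
  parent := fun Y X =>
    (Y = S ∧ X = HS) ∨ ((Y = B ∨ Y = HS) ∧ X = HB) ∨ ((Y = HS ∨ Y = HB) ∧ X = G)
  acyclic := wf_of_rank _
    (fun X => match X with | S => 0 | B => 0 | HS => 1 | HB => 2 | G => 3)
    (by
      rintro a b (⟨rfl, rfl⟩ | ⟨h, rfl⟩ | ⟨h, rfl⟩)
      · simp
      · rcases h with rfl | rfl <;> simp
      · rcases h with rfl | rfl <;> simp)
  F := fun X u v => match X with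
    | S => u 0
    | B => u 1
    | HS => v S
    | HB => v B - v HS
    | G => max (v HS) (v HB)
  F_parents := by
    intro X u a b hab
    cases X with
    | S => rfl
    | B => rfl
    | HS => exact hab S (by simp)
    | HB =>
      show a B - a HS = b B - b HS
      rw [hab B (by simp), hab HS (by simp)]
    | G =>
      show max (a HS) (a HB) = max (b HS) (b HB)
      rw [hab HS (by simp), hab HB (by simp)]
  F_range := by
    intro X u v hu hv
    cases X with
    | S => exact hu 0
    | B => exact hu 1
    | HS => exact hv S
    | HB =>
      have h1 := hv B
      have h2 := hv HS
      show v B - v HS ∈ ({0, 1} : Finset ℕ)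
      simp only [Finset.mem_insert, Finset.mem_singleton] at *
      omega
    | G =>
      have h1 := hv HS
      have h2 := hv HB
      show max (v HS) (v HB) ∈ ({0, 1} : Finset ℕ)
      simp only [Finset.mem_insert, Finset.mem_singleton] at *
      omega
  ctx := fun _ => 1
  ctx_range := fun _ => by simp

/-- The basic formula `(G = 1)`. -/
noncomputable def φG : BForm SVar ℕ := .atom G 1

set_option linter.unusedSectionVars false

theorem sol_eq_fix (M : CausalModel U V D) (X : V) :
    sol M X = M.F X M.ctx
      (fun Y => if h : M.parent Y X then sol M Y else (M.range_nonempty Y).choose) := by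
  conv_lhs => rw [sol, WellFounded.fix_eq]
  rfl

/-- The solution satisfies the structural equations. -/
theorem sol_eq (M : CausalModel U V D) (X : V) :
    sol M X = M.F X M.ctx (sol M) := by
  rw [sol_eq_fix]
  exact M.F_parents X M.ctx _ _ (fun Y hY => by simp [hY])

theorem sol_range (M : CausalModel U V D) (X : V) : sol M X ∈ M.range X := by
  induction X using WellFounded.induction M.acyclic with
  | _ X ih =>
    rw [sol_eq_fix]
    apply M.F_range X M.ctx _ M.ctx_range
    intro Y
    by_cases h : M.parent Y X
    · simpa [h] using ih Y h
    · simpa [h] using (M.range_nonempty Y).choose_spec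

variable [DecidableEq V]

theorem sol_intervene (M : CausalModel U V D) (g : PAssign M) (X : V) :
    sol (intervene M g) X = (g.1 X).getD (M.F X M.ctx (sol (intervene M g))) :=
  sol_eq (intervene M g) X

/-- Intervening only with actual values does not change the solution. -/
theorem sol_trivial (M : CausalModel U V D) (g : PAssign M)
    (h : ∀ X d, g.1 X = some d → d = sol M X) (X : V) :
    sol (intervene M g) X = sol M X := by
  induction X using WellFounded.induction M.acyclic with
  | _ X ih =>
    rw [sol_intervene]
    cases hg : g.1 X with
    | some d => simpa using h X d hg
    | none =>
      simp only [Option.getD_none]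
      rw [M.F_parents X M.ctx _ (sol M) (fun Y hY => ih Y hY), ← sol_eq]

theorem eval_congr {φ : BForm V D} {s t : V → D} (h : ∀ X, s X = t X) :
    φ.eval s ↔ φ.eval t := by
  induction φ with
  | atom X x => simp [BForm.eval, h X]
  | not ψ ihψ => simp [BForm.eval, ihψ]
  | and ψ χ ihψ ihχ => simp [BForm.eval, ihψ, ihχ]

/-- The empty set never satisfies AC1–AC2. -/
theorem not_AC12_empty (M : CausalModel U V D) (φ : BForm V D) :
    ¬ AC12 M φ (∅ : Set V) := by
  rintro ⟨hsat, g, -, hfix, hnot⟩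
  exact hnot ((eval_congr (sol_trivial M g (fun X d hd => hfix X (by simp) d hd))).mpr hsat)

/-! ### Computations in the Suzy–Billy model -/

theorem MSB_range (X : SVar) : MSB.range X = {0, 1} := rfl

theorem range_intervene (M : CausalModel U V D) (g : PAssign M) :
    (intervene M g).range = M.range := rfl

theorem solI_S (g : PAssign MSB) : sol (intervene MSB g) S = (g.1 S).getD 1 :=
  sol_intervene MSB g S

theorem solI_B (g : PAssign MSB) : sol (intervene MSB g) B = (g.1 B).getD 1 :=
  sol_intervene MSB g B

theorem solI_HS (g : PAssign MSB) :
    sol (intervene MSB g) HS = (g.1 HS).getD (sol (intervene MSB g) S) :=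
  sol_intervene MSB g HS

theorem solI_HB (g : PAssign MSB) :
    sol (intervene MSB g) HB =
      (g.1 HB).getD (sol (intervene MSB g) B - sol (intervene MSB g) HS) :=
  sol_intervene MSB g HB

theorem solI_G (g : PAssign MSB) :
    sol (intervene MSB g) G =
      (g.1 G).getD (max (sol (intervene MSB g) HS) (sol (intervene MSB g) HB)) :=
  sol_intervene MSB g G

theorem solM_S : sol MSB S = 1 := by rw [sol_eq]; rfl
theorem solM_B : sol MSB B = 1 := by rw [sol_eq]; rfl
theorem solM_HS : sol MSB HS = 1 := by rw [sol_eq]; exact solM_S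
theorem solM_HB : sol MSB HB = 0 := by
  rw [sol_eq]; show sol MSB B - sol MSB HS = 0; rw [solM_B, solM_HS]
theorem solM_G : sol MSB G = 1 := by
  rw [sol_eq]; show max (sol MSB HS) (sol MSB HB) = 1; rw [solM_HS, solM_HB]; norm_num

/-- Solution of a doubly intervened Suzy–Billy model. -/
theorem solII_S (g : PAssign MSB) (h : PAssign (intervene MSB g)) :
    sol (intervene (intervene MSB g) h) S = (h.1 S).getD ((g.1 S).getD 1) :=
  sol_intervene (intervene MSB g) h S

theorem solII_B (g : PAssign MSB) (h : PAssign (intervene MSB g)) :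
    sol (intervene (intervene MSB g) h) B = (h.1 B).getD ((g.1 B).getD 1) :=
  sol_intervene (intervene MSB g) h B

theorem solII_HS (g : PAssign MSB) (h : PAssign (intervene MSB g)) :
    sol (intervene (intervene MSB g) h) HS =
      (h.1 HS).getD ((g.1 HS).getD (sol (intervene (intervene MSB g) h) S)) :=
  sol_intervene (intervene MSB g) h HS

theorem solII_HB (g : PAssign MSB) (h : PAssign (intervene MSB g)) :
    sol (intervene (intervene MSB g) h) HB =
      (h.1 HB).getD ((g.1 HB).getD
        (sol (intervene (intervene MSB g) h) B - sol (intervene (intervene MSB g) h) HS)) :=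
  sol_intervene (intervene MSB g) h HB

theorem solII_G (g : PAssign MSB) (h : PAssign (intervene MSB g)) :
    sol (intervene (intervene MSB g) h) G =
      (h.1 G).getD ((g.1 G).getD
        (max (sol (intervene (intervene MSB g) h) HS)
             (sol (intervene (intervene MSB g) h) HB))) :=
  sol_intervene (intervene MSB g) h G

theorem solI_le_one (g : PAssign MSB) (X : SVar) : sol (intervene MSB g) X ≤ 1 := by
  have := sol_range (intervene MSB g) X
  rw [range_intervene, MSB_range] at this
  simp only [Finset.mem_insert, Finset.mem_singleton] at this
  omega

theorem Sat_φG (M : CausalModel (Fin 2) SVar ℕ) : Sat M φG ↔ sol M G = 1 := Iff.rfl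

/-- If the bottle variable is not intervened on and `H_S = 1` or `H_B = 1`, then `G = 1`. -/
theorem G_eq_one (g : PAssign MSB) (hG : g.1 G = none)
    (h : sol (intervene MSB g) HS = 1 ∨ sol (intervene MSB g) HB = 1) :
    sol (intervene MSB g) G = 1 := by
  have h1 := solI_le_one g HS
  have h2 := solI_le_one g HB
  rw [solI_G, hG, Option.getD_none]
  omega

/-- Any set avoiding `S`, `H_S`, `G` fails AC1–AC2. -/
theorem not_AC12_avoid (Xs : Set SVar) (hS : S ∉ Xs) (hHS : HS ∉ Xs) (hG : G ∉ Xs) :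
    ¬ AC12 MSB φG Xs := by
  rintro ⟨hsat, g, -, hfix, hnot⟩
  apply hnot
  rw [Sat_φG]
  have hsS : sol (intervene MSB g) S = 1 := by
    rw [solI_S]
    cases hg : g.1 S with
    | none => rfl
    | some d => simpa using (hfix S hS d hg).trans solM_S
  have hsHS : sol (intervene MSB g) HS = 1 := by
    rw [solI_HS, hsS]
    cases hg : g.1 HS with
    | none => rfl
    | some d => simpa using (hfix HS hHS d hg).trans solM_HS
  cases hg : g.1 G with
  | none => exact G_eq_one g hg (Or.inl hsHS)
  | some d => rw [solI_G, hg]; simpa using (hfix G hG d hg).trans solM_G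

theorem AC12_S : AC12 MSB φG ({S} : Set SVar) := by
  refine ⟨solM_G, ⟨fun X => match X with
      | S => some 0 | HB => some 0 | _ => none, ?_⟩, ?_, ?_, ?_⟩
  · intro X d h
    cases X <;> simp_all [MSB_range]
  · rintro X rfl; rfl
  · intro X hX d hd
    cases X with
    | S => exact absurd rfl hX
    | HB => cases hd; exact solM_HB.symm
    | _ => cases hd
  · rw [Sat_φG]
    set g : PAssign MSB := ⟨fun X => match X with
      | S => some 0 | HB => some 0 | _ => none, by
        intro X d h; cases X <;> simp_all [MSB_range]⟩ with hgdef
    show ¬ sol (intervene MSB g) G = 1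
    have hS' : sol (intervene MSB g) S = 0 := by rw [solI_S]; rfl
    have hHS' : sol (intervene MSB g) HS = 0 := by rw [solI_HS, hS']; rfl
    have hHB' : sol (intervene MSB g) HB = 0 := by rw [solI_HB]; rfl
    rw [solI_G, hHS', hHB']
    simp [hgdef]

theorem AC12_HS : AC12 MSB φG ({HS} : Set SVar) := by
  refine ⟨solM_G, ⟨fun X => match X with
      | HS => some 0 | HB => some 0 | _ => none, ?_⟩, ?_, ?_, ?_⟩
  · intro X d h
    cases X <;> simp_all [MSB_range]
  · rintro X rfl; rfl
  · intro X hX d hd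
    cases X with
    | HS => exact absurd rfl hX
    | HB => cases hd; exact solM_HB.symm
    | _ => cases hd
  · rw [Sat_φG]
    set g : PAssign MSB := ⟨fun X => match X with
      | HS => some 0 | HB => some 0 | _ => none, by
        intro X d h; cases X <;> simp_all [MSB_range]⟩ with hgdef
    show ¬ sol (intervene MSB g) G = 1
    have hHS' : sol (intervene MSB g) HS = 0 := by rw [solI_HS]; rfl
    have hHB' : sol (intervene MSB g) HB = 0 := by rw [solI_HB]; rfl
    rw [solI_G, hHS', hHB']
    simp [hgdef]

theorem AC12_G : AC12 MSB φG ({G} : Set SVar) := by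
  have hx : (0 : ℕ) ∈ MSB.range G := by rw [MSB_range]; simp
  refine ⟨solM_G, single MSB G 0 hx, ?_, ?_, ?_⟩
  · rintro X rfl; rfl
  · intro X hX d hd
    cases X <;> simp_all [single]
  · rw [Sat_φG, solI_G]
    simp [single]

theorem CC_S : ComplexCause MSB φG ({S} : Set SVar) := by
  refine ⟨AC12_S, fun Ys hYs => not_AC12_avoid Ys ?_ ?_ ?_⟩
  · exact fun h => hYs.2 (Set.singleton_subset_iff.mpr h)
  · exact fun h => by simpa using hYs.1 h
  · exact fun h => by simpa using hYs.1 h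

theorem CC_HS : ComplexCause MSB φG ({HS} : Set SVar) := by
  refine ⟨AC12_HS, fun Ys hYs => not_AC12_avoid Ys ?_ ?_ ?_⟩
  · exact fun h => by simpa using hYs.1 h
  · exact fun h => hYs.2 (Set.singleton_subset_iff.mpr h)
  · exact fun h => by simpa using hYs.1 h

/-- The intervention `[H_S ← 0]` on the Suzy–Billy model. -/
noncomputable def g0 : PAssign MSB := single MSB HS 0 (by rw [MSB_range]; simp)

/-- in the Suzy–Billy model, `ButFor(M,(G=1)) = {G}`, `S` is an HP cause
of `(G = 1)`, and `B` is a preempted cause of `(G = 1)` w.r.t. HP (putative but not an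
HP cause). -/
theorem suzy_billy :
    ButFor MSB φG = ({G} : Set SVar) ∧
    S ∈ HP MSB φG ∧
    Preempted HP MSB φG B := by
  have hSmem : S ∈ HP MSB φG := ⟨{S}, rfl, CC_S⟩
  have hHSmem : HS ∈ HP MSB φG := ⟨{HS}, rfl, CC_HS⟩
  refine ⟨?_, hSmem, ?_, ?_⟩
  · -- ButFor MSB φG = {G}
    ext X
    simp only [ButFor, Set.mem_setOf_eq, Set.mem_singleton_iff]
    constructor
    · rintro ⟨hsat, x, hx, hns⟩
      have hx' : x = 0 ∨ x = 1 := by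
        have h := hx; rw [MSB_range] at h
        simpa using h
      cases X with
      | G => rfl
      | S =>
        exfalso
        apply hns
        rw [Sat_φG]
        apply G_eq_one _ (by simp [single])
        have hS1 : sol (intervene MSB (single MSB S x hx)) S = x := by
          rw [solI_S]; simp [single]
        have hB1 : sol (intervene MSB (single MSB S x hx)) B = 1 := by
          rw [solI_B]; simp [single]
        have hHS1 : sol (intervene MSB (single MSB S x hx)) HS = x := by
          rw [solI_HS, hS1]; simp [single]
        have hHB1 : sol (intervene MSB (single MSB S x hx)) HB = 1 - x := by
          rw [solI_HB, hB1, hHS1]; simp [single]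
        rcases hx' with rfl | rfl
        · exact Or.inr (by rw [hHB1])
        · exact Or.inl (by rw [hHS1])
      | B =>
        exfalso
        apply hns
        rw [Sat_φG]
        apply G_eq_one _ (by simp [single])
        have hS1 : sol (intervene MSB (single MSB B x hx)) S = 1 := by
          rw [solI_S]; simp [single]
        have hHS1 : sol (intervene MSB (single MSB B x hx)) HS = 1 := by
          rw [solI_HS, hS1]; simp [single]
        exact Or.inl hHS1
      | HS =>
        exfalso
        apply hns
        rw [Sat_φG]
        apply G_eq_one _ (by simp [single])
        have hB1 : sol (intervene MSB (single MSB HS x hx)) B = 1 := by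
          rw [solI_B]; simp [single]
        have hHS1 : sol (intervene MSB (single MSB HS x hx)) HS = x := by
          rw [solI_HS]; simp [single]
        have hHB1 : sol (intervene MSB (single MSB HS x hx)) HB = 1 - x := by
          rw [solI_HB, hB1, hHS1]; simp [single]
        rcases hx' with rfl | rfl
        · exact Or.inr (by rw [hHB1])
        · exact Or.inl (by rw [hHS1])
      | HB =>
        exfalso
        apply hns
        rw [Sat_φG]
        apply G_eq_one _ (by simp [single])
        have hS1 : sol (intervene MSB (single MSB HB x hx)) S = 1 := by
          rw [solI_S]; simp [single]
        have hHS1 : sol (intervene MSB (single MSB HB x hx)) HS = 1 := by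
          rw [solI_HS, hS1]; simp [single]
        exact Or.inl hHS1
    · rintro rfl
      refine ⟨solM_G, 0, (by rw [MSB_range]; simp), ?_⟩
      intro hsat'
      rw [Sat_φG, solI_G] at hsat'
      simp [single] at hsat'
  · -- B is a putative cause
    refine ⟨intervene MSB g0, ⟨g0, ?_, rfl⟩, ?_, ?_, 0,
      (by rw [range_intervene, MSB_range]; simp), ?_⟩
    · intro X hX d hd
      cases X with
      | HS => exact absurd hHSmem hX
      | _ => simp [g0, single] at hd
    · rw [solM_B, solI_B]; simp [g0, single]
    · -- Sat (intervene MSB g0) φG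
      rw [Sat_φG]
      apply G_eq_one _ (by simp [g0, single])
      have hB1 : sol (intervene MSB g0) B = 1 := by rw [solI_B]; simp [g0, single]
      have hHS1 : sol (intervene MSB g0) HS = 0 := by rw [solI_HS]; simp [g0, single]
      have hHB1 : sol (intervene MSB g0) HB = 1 := by
        rw [solI_HB, hB1, hHS1]; simp [g0, single]
      exact Or.inr hHB1
    · -- ¬ Sat after further intervening [B ← 0]
      intro hsat'
      rw [Sat_φG] at hsat'
      set h := single (intervene MSB g0) B 0 (by rw [range_intervene, MSB_range]; simp)
        with hh
      have hB2 : sol (intervene (intervene MSB g0) h) B = 0 := by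
        rw [solII_B]; simp [hh, single]
      have hHS2 : sol (intervene (intervene MSB g0) h) HS = 0 := by
        rw [solII_HS]; simp [hh, g0, single]
      have hHB2 : sol (intervene (intervene MSB g0) h) HB = 0 := by
        rw [solII_HB, hB2, hHS2]; simp [hh, g0, single]
      rw [solII_G, hHS2, hHB2] at hsat'
      simp [hh, g0, single] at hsat'
  · -- B ∉ HP MSB φG
    rintro ⟨Xs, hBmem, hA, h3⟩
    by_cases hs : S ∈ Xs
    · exact h3 {S} ⟨Set.singleton_subset_iff.mpr hs,
        fun hc => by simpa using hc hBmem⟩ AC12_S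
    by_cases hhs : HS ∈ Xs
    · exact h3 {HS} ⟨Set.singleton_subset_iff.mpr hhs,
        fun hc => by simpa using hc hBmem⟩ AC12_HS
    by_cases hg : G ∈ Xs
    · exact h3 {G} ⟨Set.singleton_subset_iff.mpr hg,
        fun hc => by simpa using hc hBmem⟩ AC12_G
    · exact not_AC12_avoid Xs hs hhs hg hA

end HPFramework
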